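/- In a highest-weight representation of ŝl₂ at level k (with t := k + 2) built over a horizontal representation with Casimir C₂ = t²/2 - t, the operator T̂^c := 2 K_{ab} J^a_{-1} J^b_0 J^c_0 - t f^c_{ab} J^a_{-1} J^b_0 - t² J^c_{-1} applied to any horizontal (primary) state |v⟩ yields a vector annihilated by all J^d_1: J^d_1 T̂^c |v⟩ = 0 for all c, d. -/

import Mathlib

/-- Structure constants of sl₂ in the (0,+,-) basis (0 ↔ t⁰, 1 ↔ t⁺, 2 ↔ t⁻):
[t^a, t^b] = f^{ab}_c t^c with [t⁰,t^±] = ±t^±, [t⁺,t⁻] = 2t⁰. -/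
def sl2f (a b c : Fin 3) : ℂ :=
  if a = 0 ∧ b = 1 ∧ c = 1 then 1
  else if a = 1 ∧ b = 0 ∧ c = 1 then -1
  else if a = 0 ∧ b = 2 ∧ c = 2 then -1
  else if a = 2 ∧ b = 0 ∧ c = 2 then 1
  else if a = 1 ∧ b = 2 ∧ c = 0 then 2
  else if a = 2 ∧ b = 1 ∧ c = 0 then -2
  else 0

/-- The (normalized, lowered) Killing form: K_{00} = 2, K_{+-} = K_{-+} = 1. -/
def sl2K (a b : Fin 3) : ℂ :=
  if a = 0 ∧ b = 0 then 2
  else if a = 1 ∧ b = 2 then 1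
  else if a = 2 ∧ b = 1 then 1
  else 0

/-- The inverse (raised) Killing form: K^{00} = 1/2, K^{+-} = K^{-+} = 1. -/
noncomputable def sl2Kinv (a b : Fin 3) : ℂ :=
  if a = 0 ∧ b = 0 then 1/2
  else if a = 1 ∧ b = 2 then 1
  else if a = 2 ∧ b = 1 then 1
  else 0

/-- The lowered structure constants f^c_{ab} = K_{ad} f^{cd}_b. -/
noncomputable def sl2fLow (c a b : Fin 3) : ℂ := ∑ d, sl2K a d * sl2f c d b

/-- The level-1 null operator
T̂^c = 2 K_{ab} J^a_{-1} J^b_0 J^c_0 - t f^c_{ab} J^a_{-1} J^b_0 - t² J^c_{-1}. -/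
noncomputable def nullOp {V : Type*} [AddCommGroup V] [Module ℂ V]
    (J : Fin 3 → ℤ → V →ₗ[ℂ] V) (t : ℂ) (c : Fin 3) : V →ₗ[ℂ] V :=
  (2 : ℂ) • (∑ a, ∑ b, sl2K a b • (J a (-1) ∘ₗ J b 0 ∘ₗ J c 0))
    - t • (∑ a, ∑ b, sl2fLow c a b • (J a (-1) ∘ₗ J b 0))
    - t ^ 2 • J c (-1)

set_option maxHeartbeats 2000000 in
/-- In a highest-weight ŝl₂-module at level k (t = k+2) built over a horizontal
module with Casimir eigenvalue t²/2 - t, the operator T̂^c applied to any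
horizontal state v yields a vector annihilated by every J^d_1. -/
theorem null_operator_gives_null_vector
    {V : Type*} [AddCommGroup V] [Module ℂ V]
    (J : Fin 3 → ℤ → V →ₗ[ℂ] V) (k t : ℂ) (ht : t = k + 2)
    (hcomm : ∀ (a b : Fin 3) (n m : ℤ), J a n ∘ₗ J b m - J b m ∘ₗ J a n =
      (∑ c, sl2f a b c • J c (n + m)) +
        ((n : ℂ) * k * sl2Kinv a b * (if n + m = 0 then 1 else 0)) • LinearMap.id)
    (v : V) (hv : ∀ (a : Fin 3) (n : ℤ), 0 < n → J a n v = 0)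
    (hC : (2 : ℂ) • (J 0 0) ((J 0 0) v) + (J 1 0) ((J 2 0) v) + (J 2 0) ((J 1 0) v)
        = (t ^ 2 / 2 - t) • v) :
    ∀ c d : Fin 3, J d 1 (nullOp J t c v) = 0 := by
  subst ht
  have comm : ∀ (a b : Fin 3) (n m : ℤ) (x : V), J a n (J b m x) = J b m (J a n x) +
      (∑ c, sl2f a b c • J c (n + m) x) +
      ((n : ℂ) * k * sl2Kinv a b * (if n + m = 0 then 1 else 0)) • x := by
    intro a b n m x
    have h := LinearMap.congr_fun (hcomm a b n m) x
    simp only [LinearMap.sub_apply, LinearMap.add_apply, LinearMap.comp_apply,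
      LinearMap.smul_apply, LinearMap.coe_sum, Finset.sum_apply, LinearMap.id_apply] at h
    rw [sub_eq_iff_eq_add] at h
    rw [h]; abel
  have hv1 : ∀ a : Fin 3, J a 1 v = 0 := fun a => hv a 1 one_pos
  have h10 : ∀ (d b : Fin 3) (x : V), J d 1 (J b 0 x) =
      J b 0 (J d 1 x) + ∑ c, sl2f d b c • J c 1 x := by
    intro d b x
    have h := comm d b 1 0 x
    norm_num at h
    exact h
  have hJ1v : ∀ (d b : Fin 3), J d 1 (J b 0 v) = 0 := by
    intro d b; rw [h10]; simp [hv1]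
  have hJ1vv : ∀ (d b c : Fin 3), J d 1 (J b 0 (J c 0 v)) = 0 := by
    intro d b c; rw [h10]; simp [hJ1v]
  have h1m1 : ∀ (d a : Fin 3) (x : V), J d 1 (J a (-1) x) =
      J a (-1) (J d 1 x) + (∑ c, sl2f d a c • J c 0 x) + (k * sl2Kinv d a) • x := by
    intro d a x
    have h := comm d a 1 (-1) x
    norm_num at h
    exact h
  have hz : ∀ (a b : Fin 3) (x : V), J a 0 (J b 0 x) =
      J b 0 (J a 0 x) + ∑ c, sl2f a b c • J c 0 x := by
    intro a b x
    have h := comm a b 0 0 x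
    norm_num at h
    exact h
  have hHE : ∀ x : V, J 0 0 (J 1 0 x) = J 1 0 (J 0 0 x) + J 1 0 x := by
    intro x
    have h := hz 0 1 x
    norm_num +decide [sl2f, Fin.sum_univ_three] at h
    simpa using h
  have hFE : ∀ x : V, J 2 0 (J 1 0 x) = J 1 0 (J 2 0 x) - (2 : ℂ) • J 0 0 x := by
    intro x
    have h := hz 2 1 x
    norm_num +decide [sl2f, Fin.sum_univ_three] at h
    rw [h]; module
  have hFH : ∀ x : V, J 2 0 (J 0 0 x) = J 0 0 (J 2 0 x) + J 2 0 x := by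
    intro x
    have h := hz 2 0 x
    norm_num +decide [sl2f, Fin.sum_univ_three] at h
    simpa using h
  have hC' : (2 : ℂ) • J 0 0 (J 0 0 v) + (2 : ℂ) • J 1 0 (J 2 0 v) - (2 : ℂ) • J 0 0 v
      = ((k + 2) ^ 2 / 2 - (k + 2)) • v := by
    rw [hFE] at hC
    linear_combination (norm := module) hC
  have f0 : (⟨0, by norm_num⟩ : Fin 3) = 0 := rfl
  have f1 : (⟨1, by norm_num⟩ : Fin 3) = 1 := rfl
  have f2 : (⟨2, by norm_num⟩ : Fin 3) = 2 := rfl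
  intro c d
  fin_cases c <;> fin_cases d <;>
  · simp only [f0, f1, f2, nullOp, LinearMap.sub_apply, LinearMap.smul_apply, LinearMap.coe_sum,
      Finset.sum_apply, LinearMap.add_apply, LinearMap.comp_apply, Fin.sum_univ_three, map_add, map_sub, map_smul,
      h1m1, hJ1vv, hJ1v, hv1, map_zero, smul_zero, add_zero, zero_add]
    norm_num +decide [sl2f, sl2K, sl2Kinv, sl2fLow, Fin.sum_univ_three]
    simp only [hHE, hFE, hFH, map_add, map_sub, map_smul, smul_add, smul_sub, smul_smul]
    first
      | linear_combination (norm := module) (k + 2) • hC'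
      | linear_combination (norm := module) (2 * (k + 2)) • hC'
      | linear_combination (norm := module) (0 : ℂ) • hC'
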